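/- Fix k ≥ 1, α, β ∈ ℝ with γ = √(α² + β²), a continuous 2π-periodic g : ℝ → ℝ, and i.i.d. standard complex Gaussians (Z_j)_{j=1}^k. Then the real random variables ∫_0^{2π} g(θ) exp( −(1/2) Σ_{j=1}^k (1/√j)[ (α−iβ) Z_j e^{−ijθ} + (α+iβ) conj(Z_j) e^{ijθ} ] ) dθ and ∫_0^{2π} g(θ) exp( (γ/2) Σ_{j=1}^k (1/√j)[ Z_j e^{ijθ} + conj(Z_j) e^{−ijθ} ] ) dθ have the same law (both exponents are real for every realization). -/

import Mathlib

open MeasureTheory Filter Finset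

noncomputable section

/-- `ee x = exp(i x)`. -/
def ee (x : ℝ) : ℂ := Complex.exp (Complex.I * x)

/-- Joint law of `k` i.i.d. standard complex Gaussians. -/
def gaussPi (k : ℕ) : Measure (Fin k → ℂ) :=
  Measure.map (fun x : Fin k → ℝ × ℝ => fun i => ((x i).1 : ℂ) + (x i).2 * Complex.I)
    (Measure.pi fun _ : Fin k =>
      (ProbabilityTheory.gaussianReal 0 (1/2)).prod (ProbabilityTheory.gaussianReal 0 (1/2)))

section Auxiliary

open ProbabilityTheory
open scoped ENNReal NNReal

lemma map_withDensity_measEquiv {α β : Type*} [MeasurableSpace α] [MeasurableSpace β]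
    (e : α ≃ᵐ β) (ν : Measure α) (f : β → ℝ≥0∞) (hf : Measurable f) :
    Measure.map e (ν.withDensity (fun x => f (e x))) = (Measure.map e ν).withDensity f := by
  ext s hs
  rw [Measure.map_apply e.measurable hs, withDensity_apply _ (e.measurable hs),
    withDensity_apply _ hs, setLIntegral_map hs hf e.measurable]

lemma gauss_prod_withDensity :
    (gaussianReal 0 (1/2)).prod (gaussianReal 0 (1/2)) =
      (volume : Measure (ℝ × ℝ)).withDensity
        (fun x => gaussianPDF 0 (1/2) x.1 * gaussianPDF 0 (1/2) x.2) := by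
  have hv : (1/2 : ℝ≥0) ≠ 0 := by norm_num
  have hμ : gaussianReal 0 (1/2) = volume.withDensity (gaussianPDF 0 (1/2)) :=
    gaussianReal_of_var_ne_zero 0 hv
  refine Measure.prod_eq (μ := gaussianReal 0 (1/2)) (ν := gaussianReal 0 (1/2)) fun s t hs ht => ?_
  rw [withDensity_apply _ (hs.prod ht), Measure.volume_eq_prod, ← Measure.prod_restrict,
    lintegral_prod_mul (measurable_gaussianPDF 0 (1/2)).aemeasurable
      (measurable_gaussianPDF 0 (1/2)).aemeasurable,
    hμ, withDensity_apply _ hs, withDensity_apply _ ht]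

/-- The standard complex Gaussian law on `ℂ`. -/
def gaussC : Measure ℂ :=
  Measure.map (fun p : ℝ × ℝ => (p.1 : ℂ) + p.2 * Complex.I)
    ((gaussianReal 0 (1/2)).prod (gaussianReal 0 (1/2)))

/-- Its density. -/
def qdens : ℂ → ℝ≥0∞ := fun z => gaussianPDF 0 (1/2) z.re * gaussianPDF 0 (1/2) z.im

lemma qdens_measurable : Measurable qdens :=
  ((measurable_gaussianPDF 0 (1/2)).comp Complex.measurable_re).mul
    ((measurable_gaussianPDF 0 (1/2)).comp Complex.measurable_im)

lemma map_eq_symm_equiv :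
    (fun p : ℝ × ℝ => (p.1 : ℂ) + p.2 * Complex.I) = ⇑Complex.measurableEquivRealProd.symm := by
  funext p
  apply Complex.ext <;> simp [Complex.measurableEquivRealProd_symm_apply]

lemma gaussC_eq : gaussC = (volume : Measure ℂ).withDensity qdens := by
  rw [gaussC, gauss_prod_withDensity, map_eq_symm_equiv]
  have h1 : (fun x : ℝ × ℝ => gaussianPDF 0 (1/2) x.1 * gaussianPDF 0 (1/2) x.2)
      = fun x => qdens (Complex.measurableEquivRealProd.symm x) := by
    funext x
    simp [qdens, Complex.measurableEquivRealProd_symm_apply]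
  rw [h1, map_withDensity_measEquiv _ _ _ qdens_measurable,
    (Complex.volume_preserving_equiv_real_prod.symm _).map_eq]

lemma qdens_eq (w : ℂ) :
    qdens w = ENNReal.ofReal (((Real.sqrt (2 * Real.pi * ((1/2 : ℝ≥0) : ℝ)))⁻¹) ^ 2
      * Real.exp (- Complex.normSq w)) := by
  simp only [qdens, gaussianPDF_def, gaussianPDFReal_def]
  rw [← ENNReal.ofReal_mul (by positivity)]
  congr 1
  have h2 : ((1/2 : ℝ≥0) : ℝ) = 1/2 := by norm_num
  rw [h2, Complex.normSq_apply, sub_zero, sub_zero]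
  rw [show (2 : ℝ) * (1/2) = 1 by norm_num, div_one, div_one,
    show -(w.re * w.re + w.im * w.im) = -w.re ^ 2 + -w.im ^ 2 by ring, Real.exp_add]
  ring

lemma gaussC_rot_inv (c : ℂ) (hc : ‖c‖ = 1) :
    Measure.map (fun w : ℂ => c * (starRingEnd ℂ) w) gaussC = gaussC := by
  set L : ℂ ≃ₗᵢ[ℝ] ℂ := Complex.conjLIE.trans
    (rotation ⟨c, mem_sphere_zero_iff_norm.2 (by exact hc)⟩) with hL
  have hLfun : (fun w : ℂ => c * (starRingEnd ℂ) w) = ⇑L.toMeasurableEquiv := by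
    funext w
    simp [hL, Complex.conjLIE_apply, rotation_apply]
    rfl
  have hq : (fun x => qdens (L.toMeasurableEquiv x)) = qdens := by
    funext x
    rw [qdens_eq, qdens_eq]
    congr 3
    have : ‖L.toMeasurableEquiv x‖ = ‖x‖ := by
      have h := L.norm_map x
      exact h
    rw [← Complex.sq_norm, ← Complex.sq_norm x, this]
  rw [hLfun, gaussC_eq]
  conv_lhs => rw [← hq]
  rw [map_withDensity_measEquiv _ _ _ qdens_measurable]
  congr 1
  have := L.measurePreserving.map_eq
  simpa using this

lemma measurable_phi : Measurable (fun p : ℝ × ℝ => (p.1 : ℂ) + p.2 * Complex.I) :=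
  (Complex.measurable_ofReal.comp measurable_fst).add
    ((Complex.measurable_ofReal.comp measurable_snd).mul_const Complex.I)

instance : IsProbabilityMeasure gaussC :=
  Measure.isProbabilityMeasure_map measurable_phi.aemeasurable

lemma gaussPi_eq (k : ℕ) : gaussPi k = Measure.pi fun _ : Fin k => gaussC :=
  (measurePreserving_pi _ _ fun _ => ⟨measurable_phi, rfl⟩).map_eq

lemma gaussPi_rot_inv (k : ℕ) (c : ℂ) (hc : ‖c‖ = 1) :
    MeasurePreserving (fun z : Fin k → ℂ => fun i => c * (starRingEnd ℂ) (z i))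
      (gaussPi k) (gaussPi k) := by
  rw [gaussPi_eq]
  exact measurePreserving_pi _ _ fun _ =>
    ⟨(Complex.continuous_conj.measurable).const_mul c, gaussC_rot_inv c hc⟩

end Auxiliary

theorem rotation_equality_in_law (k : ℕ) (hk : 1 ≤ k) (α β : ℝ)
    (g : ℝ → ℝ) (hgc : Continuous g) (hgper : Function.Periodic g (2 * Real.pi)) :
    Measure.map (fun z : Fin k → ℂ =>
        ∫ θ in (0:ℝ)..(2 * Real.pi), g θ * Real.exp
          ((-(1/2 : ℂ) * ∑ i : Fin k, (1 / (Real.sqrt ((i : ℕ) + 1) : ℂ)) *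
            (((α:ℂ) - β * Complex.I) * z i * ee (-(((i : ℕ) + 1) * θ)) +
             ((α:ℂ) + β * Complex.I) * (starRingEnd ℂ) (z i) * ee (((i : ℕ) + 1) * θ))).re))
      (gaussPi k) =
    Measure.map (fun z : Fin k → ℂ =>
        ∫ θ in (0:ℝ)..(2 * Real.pi), g θ * Real.exp
          (((Real.sqrt (α ^ 2 + β ^ 2) / 2 : ℝ) : ℂ) *
            (∑ i : Fin k, (1 / (Real.sqrt ((i : ℕ) + 1) : ℂ)) *
              (z i * ee (((i : ℕ) + 1) * θ) +
               (starRingEnd ℂ) (z i) * ee (-(((i : ℕ) + 1) * θ))))).re)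
      (gaussPi k) := by
  classical
  set γ : ℝ := Real.sqrt (α ^ 2 + β ^ 2) with hγdef
  -- the unit complex number `u` with `α + iβ = γ u`
  set u : ℂ := if γ = 0 then 1 else ((α : ℂ) + β * Complex.I) / γ with hudef
  have habs : ‖(α : ℂ) + β * Complex.I‖ = γ := Complex.norm_add_mul_I α β
  have hu : ‖u‖ = 1 := by
    by_cases h : γ = 0
    · simp [hudef, h]
    · rw [hudef, if_neg h, norm_div, habs, Complex.norm_real, Real.norm_eq_abs,
        abs_of_nonneg (Real.sqrt_nonneg _), div_self h]
  have huA : ((α : ℂ) + β * Complex.I) = γ * u := by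
    by_cases h : γ = 0
    · have h0 : α ^ 2 + β ^ 2 = 0 := by
        have := habs
        rw [h] at this
        have h2 := norm_nonneg ((α : ℂ) + β * Complex.I)
        nlinarith [Real.sq_sqrt (by positivity : (0:ℝ) ≤ α ^ 2 + β ^ 2), Real.sqrt_nonneg (α ^ 2 + β ^ 2)]
      have hα : α = 0 := by nlinarith [sq_nonneg α, sq_nonneg β]
      have hβ : β = 0 := by nlinarith [sq_nonneg α, sq_nonneg β]
      simp [hα, hβ, h]
    · rw [hudef, if_neg h, mul_div_cancel₀]
      exact_mod_cast Complex.ofReal_ne_zero.mpr h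
  have huB : ((α : ℂ) - β * Complex.I) = γ * (starRingEnd ℂ) u := by
    have h2 := congrArg (starRingEnd ℂ) huA
    simp only [map_add, map_mul, Complex.conj_ofReal, Complex.conj_I] at h2
    linear_combination h2
  have huC : (γ : ℂ) * (u * (starRingEnd ℂ) u) = γ := by
    rw [Complex.mul_conj, Complex.normSq_eq_norm_sq, hu]
    simp
  -- the rotation map
  set T : (Fin k → ℂ) → (Fin k → ℂ) := fun z i => (-u) * (starRingEnd ℂ) (z i) with hTdef
  have hTpres : MeasurePreserving T (gaussPi k) (gaussPi k) :=
    gaussPi_rot_inv k (-u) (by rw [norm_neg]; exact hu)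
  -- the two integrand functions
  set f1 : (Fin k → ℂ) → ℝ := fun z =>
    ∫ θ in (0:ℝ)..(2 * Real.pi), g θ * Real.exp
      ((-(1/2 : ℂ) * ∑ i : Fin k, (1 / (Real.sqrt ((i : ℕ) + 1) : ℂ)) *
        (((α:ℂ) - β * Complex.I) * z i * ee (-(((i : ℕ) + 1) * θ)) +
         ((α:ℂ) + β * Complex.I) * (starRingEnd ℂ) (z i) * ee (((i : ℕ) + 1) * θ))).re) with hf1def
  set f2 : (Fin k → ℂ) → ℝ := fun z =>
    ∫ θ in (0:ℝ)..(2 * Real.pi), g θ * Real.exp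
      ((((γ / 2 : ℝ) : ℂ) *
        (∑ i : Fin k, (1 / (Real.sqrt ((i : ℕ) + 1) : ℂ)) *
          (z i * ee (((i : ℕ) + 1) * θ) +
           (starRingEnd ℂ) (z i) * ee (-(((i : ℕ) + 1) * θ))))).re) with hf2def
  -- pointwise identity of exponents
  have hexp : ∀ (z : Fin k → ℂ) (θ : ℝ),
      (-(1/2 : ℂ) * ∑ i : Fin k, (1 / (Real.sqrt ((i : ℕ) + 1) : ℂ)) *
        (((α:ℂ) - β * Complex.I) * (T z i) * ee (-(((i : ℕ) + 1) * θ)) +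
         ((α:ℂ) + β * Complex.I) * (starRingEnd ℂ) (T z i) * ee (((i : ℕ) + 1) * θ)))
      = ((γ / 2 : ℝ) : ℂ) *
        (∑ i : Fin k, (1 / (Real.sqrt ((i : ℕ) + 1) : ℂ)) *
          (z i * ee (((i : ℕ) + 1) * θ) +
           (starRingEnd ℂ) (z i) * ee (-(((i : ℕ) + 1) * θ)))) := by
    intro z θ
    push_cast
    rw [huA, huB]
    conv_rhs => rw [← huC]
    simp only [hTdef, map_mul, map_neg, Complex.conj_conj, Finset.mul_sum]
    refine Finset.sum_congr rfl fun i _ => ?_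
    ring
  have hcomp : f1 ∘ T = f2 := by
    funext z
    simp only [Function.comp_apply, hf1def, hf2def]
    refine intervalIntegral.integral_congr fun θ _ => ?_
    rw [hexp z θ]
  -- continuity of `f1`
  have hf1c : Continuous f1 := by
    rw [hf1def]
    apply intervalIntegral.continuous_parametric_intervalIntegral_of_continuous'
    unfold ee Function.uncurry
    simp only [starRingEnd_apply]
    fun_prop
  -- conclude
  show Measure.map f1 (gaussPi k) = Measure.map f2 (gaussPi k)
  calc Measure.map f1 (gaussPi k)
      = Measure.map f1 (Measure.map T (gaussPi k)) := by rw [hTpres.map_eq]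
    _ = Measure.map (f1 ∘ T) (gaussPi k) :=
        Measure.map_map hf1c.measurable hTpres.measurable
    _ = Measure.map f2 (gaussPi k) := by rw [hcomp]

end
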